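/- arXiv:2410.20832 — 2 statements merged into one kernel-verified Lean document; each statement's English description precedes it below -/
import Mathlib

section
/- Let H be a {K4^{3-}, F5}-free 3-graph and S ⊆ V(H) a vertex set. Then for every vertex v ∈ V(H), the number of pairs in the link of v that lie entirely inside S satisfies |L_H(v, S)| ≥ |L_H(v)| − α(H)·|V(H) \ S|. -/
open Finset

section Defs

variable {V : Type*} [DecidableEq V]

/-- The degree of a vertex `v` in the 3-graph `H`: the number of edges containing `v`. -/
def degH (H : Finset (Finset V)) (v : V) : ℕ :=
  (H.filter fun e => v ∈ e).card

/-- `H` contains a copy of the generalized triangle `F₅ = {abc, abd, cde}`. -/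
def HasF5 (H : Finset (Finset V)) : Prop :=
  ∃ a b c d e : V,
    a ≠ b ∧ a ≠ c ∧ a ≠ d ∧ a ≠ e ∧ b ≠ c ∧ b ≠ d ∧ b ≠ e ∧ c ≠ d ∧ c ≠ e ∧ d ≠ e ∧
    ({a, b, c} : Finset V) ∈ H ∧ ({a, b, d} : Finset V) ∈ H ∧ ({c, d, e} : Finset V) ∈ H

/-- `H` contains a copy of `K₄³⁻ = {abc, abd, acd}`. -/
def HasK43m (H : Finset (Finset V)) : Prop :=
  ∃ a b c d : V,
    a ≠ b ∧ a ≠ c ∧ a ≠ d ∧ b ≠ c ∧ b ≠ d ∧ c ≠ d ∧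
    ({a, b, c} : Finset V) ∈ H ∧ ({a, b, d} : Finset V) ∈ H ∧ ({a, c, d} : Finset V) ∈ H

/-- `H` is 3-partite: the vertex set can be partitioned into three parts so that every
edge has at most one vertex in each part. -/
def Tripartite (H : Finset (Finset V)) : Prop :=
  ∃ P : V → Fin 3, ∀ e ∈ H, ∀ u ∈ e, ∀ v ∈ e, u ≠ v → P u ≠ P v

/-- The shadow graph `∂H` of the 3-graph `H`: two distinct vertices are adjacent iff
they lie in a common edge of `H`. -/
def shadowG (H : Finset (Finset V)) : SimpleGraph V where
  Adj u v := u ≠ v ∧ ∃ e ∈ H, u ∈ e ∧ v ∈ e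
  symm := by
    constructor
    rintro u v ⟨hne, e, he, hu, hv⟩
    exact ⟨hne.symm, e, he, hv, hu⟩
  loopless := by constructor; rintro u ⟨hne, -⟩; exact hne rfl

end Defs

section LinkDefs

variable {V : Type*} [DecidableEq V]

/-- The link of a vertex `v` in the 3-graph `H`: all pairs `e` with `e ∪ {v} ∈ H`. -/
def link (H : Finset (Finset V)) (v : V) : Finset (Finset V) :=
  (H.filter fun e => v ∈ e).image fun e => e.erase v

/-- The pairs in the link of `v` that lie entirely inside `S`. -/
def linkIn (H : Finset (Finset V)) (v : V) (S : Finset V) : Finset (Finset V) :=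
  (link H v).filter fun p => p ⊆ S

/-- A set `I` is independent in `H` if every edge meets it in at most one vertex. -/
def IsIndep (H : Finset (Finset V)) (I : Finset V) : Prop :=
  ∀ e ∈ H, (e ∩ I).card ≤ 1

instance (H : Finset (Finset V)) (I : Finset V) : Decidable (IsIndep H I) := by
  unfold IsIndep; infer_instance

/-- The independence number `α(H)`: the maximum size of an independent set. -/
def indepNum [Fintype V] (H : Finset (Finset V)) : ℕ :=
  ((Finset.univ : Finset (Finset V)).filter fun I => IsIndep H I).sup Finset.card

end LinkDefs


section Aux

variable {V : Type*} [DecidableEq V]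

lemma exists_third {e : Finset V} {w1 w2 : V} (h3 : e.card = 3) (h1 : w1 ∈ e)
    (h2 : w2 ∈ e) (hne : w1 ≠ w2) : ∃ x, x ≠ w1 ∧ x ≠ w2 ∧ e = {w1, w2, x} := by
  have hm2 : w2 ∈ e.erase w1 := Finset.mem_erase.2 ⟨hne.symm, h2⟩
  have hc : ((e.erase w1).erase w2).card = 1 := by
    rw [Finset.card_erase_of_mem hm2, Finset.card_erase_of_mem h1, h3]
  obtain ⟨x, hx⟩ := Finset.card_eq_one.1 hc
  have hxm : x ∈ (e.erase w1).erase w2 := hx ▸ Finset.mem_singleton_self x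
  refine ⟨x, ?_, ?_, ?_⟩
  · exact Finset.ne_of_mem_erase (Finset.mem_of_mem_erase hxm)
  · exact Finset.ne_of_mem_erase hxm
  · rw [show ({w1, w2, x} : Finset V) = insert w1 (insert w2 {x}) from rfl,
      ← hx, Finset.insert_erase hm2, Finset.insert_erase h1]

lemma key_bound [Fintype V] (H : Finset (Finset V)) (h3 : ∀ e ∈ H, e.card = 3)
    (hK : ¬ HasK43m H) (hF5 : ¬ HasF5 H) (v u : V) :
    ((link H v).filter fun p => u ∈ p).card ≤ indepNum H := by
  set I : Finset V :=
    Finset.univ.filter fun w => ({v, u, w} : Finset V) ∈ H ∧ w ≠ v ∧ w ≠ u with hI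
  -- basic facts about members of the filtered link
  have hfact : ∀ p ∈ (link H v).filter fun p => u ∈ p,
      u ∈ p ∧ v ∉ p ∧ p.card = 2 ∧ insert v p ∈ H := by
    intro p hp
    rw [Finset.mem_filter] at hp
    obtain ⟨hpl, hup⟩ := hp
    rw [link, Finset.mem_image] at hpl
    obtain ⟨e, he, hpe⟩ := hpl
    rw [Finset.mem_filter] at he
    obtain ⟨heH, hve⟩ := he
    refine ⟨hup, ?_, ?_, ?_⟩
    · rw [← hpe]; exact Finset.notMem_erase v e
    · rw [← hpe, Finset.card_erase_of_mem hve, h3 e heH]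
    · rw [← hpe, Finset.insert_erase hve]; exact heH
  -- Step A: I is independent
  have hA : IsIndep H I := by
    intro e he
    by_contra hcon
    push_neg at hcon
    obtain ⟨w1, hw1, w2, hw2, hw12⟩ := Finset.one_lt_card.1 hcon
    rw [Finset.mem_inter, hI, Finset.mem_filter] at hw1 hw2
    obtain ⟨hw1e, -, hw1H, hw1v, hw1u⟩ := hw1
    obtain ⟨hw2e, -, hw2H, hw2v, hw2u⟩ := hw2
    have hvu : v ≠ u := by
      rintro rfl
      have hcard := h3 _ hw1H
      have : ({v, v, w1} : Finset V) = {v, w1} := Finset.insert_idem v {w1}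
      rw [this] at hcard
      have := Finset.card_insert_le v ({w1} : Finset V)
      simp [hcard] at this
    obtain ⟨x, hxw1, hxw2, hex⟩ := exists_third (h3 e he) hw1e hw2e hw12
    by_cases hxv : x = v
    · apply hK
      refine ⟨v, u, w1, w2, hvu, hw1v.symm, hw2v.symm, hw1u.symm, hw2u.symm, hw12,
        hw1H, hw2H, ?_⟩
      have : ({v, w1, w2} : Finset V) = e := by
        rw [hex, hxv]; ext a; simp; tauto
      rw [this]; exact he
    · by_cases hxu : x = u
      · apply hK
        refine ⟨u, v, w1, w2, hvu.symm, hw1u.symm, hw2u.symm, hw1v.symm, hw2v.symm,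
          hw12, ?_, ?_, ?_⟩
        · have : ({u, v, w1} : Finset V) = {v, u, w1} := by ext a; simp; tauto
          rw [this]; exact hw1H
        · have : ({u, v, w2} : Finset V) = {v, u, w2} := by ext a; simp; tauto
          rw [this]; exact hw2H
        · have : ({u, w1, w2} : Finset V) = e := by
            rw [hex, hxu]; ext a; simp; tauto
          rw [this]; exact he
      · apply hF5
        refine ⟨v, u, w1, w2, x, hvu, hw1v.symm, hw2v.symm, fun h => hxv h.symm,
          hw1u.symm, hw2u.symm, fun h => hxu h.symm, hw12, fun h => hxw1 h.symm,
          fun h => hxw2 h.symm, hw1H, hw2H, ?_⟩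
        have : ({w1, w2, x} : Finset V) = e := hex.symm
        rw [this]; exact he
  -- Step B: injection into singletons of I
  have hB : ((link H v).filter fun p => u ∈ p).card ≤ I.card := by
    have hinj : ∀ p ∈ (link H v).filter fun p => u ∈ p,
        p.erase u ∈ I.image (fun w => ({w} : Finset V)) := by
      intro p hp
      obtain ⟨hup, hvp, hpc, hpH⟩ := hfact p hp
      have hc1 : (p.erase u).card = 1 := by
        rw [Finset.card_erase_of_mem hup, hpc]
      obtain ⟨w, hw⟩ := Finset.card_eq_one.1 hc1
      have hwm : w ∈ p.erase u := hw ▸ Finset.mem_singleton_self w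
      have hwp : w ∈ p := Finset.mem_of_mem_erase hwm
      have hwu : w ≠ u := Finset.ne_of_mem_erase hwm
      have hwv : w ≠ v := fun h => hvp (h ▸ hwp)
      have hpeq : p = insert u {w} := by
        rw [← hw, Finset.insert_erase hup]
      have hmem : ({v, u, w} : Finset V) ∈ H := by
        have : ({v, u, w} : Finset V) = insert v p := by rw [hpeq]
        rw [this]; exact hpH
      rw [Finset.mem_image]
      exact ⟨w, Finset.mem_filter.2 ⟨Finset.mem_univ w, hmem, hwv, hwu⟩, hw.symm⟩
    have hcard : ((link H v).filter fun p => u ∈ p).card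
        ≤ (I.image (fun w => ({w} : Finset V))).card := by
      apply Finset.card_le_card_of_injOn (fun p => p.erase u) (fun p hp => hinj p (Finset.mem_coe.1 hp))
      intro p1 hp1 p2 hp2 h
      obtain ⟨hu1, -, -, -⟩ := hfact p1 hp1
      obtain ⟨hu2, -, -, -⟩ := hfact p2 hp2
      simp only at h
      rw [← Finset.insert_erase hu1, h, Finset.insert_erase hu2]
    calc ((link H v).filter fun p => u ∈ p).card
        ≤ (I.image (fun w => ({w} : Finset V))).card := hcard
      _ = I.card := Finset.card_image_of_injective I
          (fun a b h => Finset.singleton_injective h)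
  -- Step C
  have hC : I.card ≤ indepNum H :=
    Finset.le_sup (f := Finset.card)
      (Finset.mem_filter.2 ⟨Finset.mem_univ I, hA⟩)
  exact le_trans hB hC

end Aux

/-- For a `{K₄³⁻, F₅}`-free 3-graph `H`, a vertex set `S` and any vertex `v`,
`|L_H(v, S)| ≥ |L_H(v)| - α(H)·|V(H) \ S|`. -/
theorem link_in_S_lower_bound (V : Type*) [Fintype V] [DecidableEq V]
    (H : Finset (Finset V)) (h3 : ∀ e ∈ H, e.card = 3)
    (hK : ¬ HasK43m H) (hF5 : ¬ HasF5 H)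
    (S : Finset V) (v : V) :
    ((link H v).card : ℤ) - (indepNum H : ℤ) * ((Finset.univ \ S).card : ℤ)
      ≤ ((linkIn H v S).card : ℤ) := by
  classical
  set T := (Finset.univ \ S : Finset V) with hT
  have hsub : linkIn H v S ⊆ link H v := Finset.filter_subset _ _
  have hsd : link H v \ linkIn H v S ⊆
      T.biUnion (fun u => (link H v).filter fun p => u ∈ p) := by
    intro p hp
    rw [Finset.mem_sdiff] at hp
    obtain ⟨hpl, hpn⟩ := hp
    have : ¬ p ⊆ S := fun h => hpn (Finset.mem_filter.2 ⟨hpl, h⟩)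
    obtain ⟨u, hup, huS⟩ := Finset.not_subset.1 this
    exact Finset.mem_biUnion.2 ⟨u, Finset.mem_sdiff.2 ⟨Finset.mem_univ u, huS⟩,
      Finset.mem_filter.2 ⟨hpl, hup⟩⟩
  have h1 : (link H v \ linkIn H v S).card ≤ indepNum H * T.card := by
    calc (link H v \ linkIn H v S).card
        ≤ (T.biUnion (fun u => (link H v).filter fun p => u ∈ p)).card :=
          Finset.card_le_card hsd
      _ ≤ ∑ u ∈ T, ((link H v).filter fun p => u ∈ p).card :=
          Finset.card_biUnion_le
      _ ≤ ∑ _u ∈ T, indepNum H :=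
          Finset.sum_le_sum fun u _ => key_bound H h3 hK hF5 v u
      _ = indepNum H * T.card := by rw [Finset.sum_const, smul_eq_mul, mul_comm]
  have h2 : (link H v \ linkIn H v S).card + (linkIn H v S).card = (link H v).card :=
    Finset.card_sdiff_add_card_eq_card hsub
  have h4 : (link H v).card ≤ (linkIn H v S).card + indepNum H * T.card := by omega
  have h5 : ((link H v).card : ℤ) ≤ ((linkIn H v S).card : ℤ)
      + (indepNum H : ℤ) * (T.card : ℤ) := by exact_mod_cast h4
  linarith
end

section
/- For every integer d ≥ 1, the graph Γ_d on vertex set [3d−1] is d-regular, and for every integer i with 1 ≤ i ≤ d, Γ_i is a subgraph of Γ_d (on the respective vertex sets, Γ_i embeds into Γ_d as a subgraph). -/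
open Finset

/-- The Andrásfai-type graph `Γ_d` on vertex set `Fin (3d - 1)`: `i` and `j` are
adjacent iff `j - i ≡ ±s (mod 3d - 1)` for some `s ∈ {1, 4, 7, …, 3⌈d/2⌉ - 2}`,
i.e. `s = 3k + 1` with `0 ≤ k < ⌈d/2⌉`. -/
def Gamma (d : ℕ) : SimpleGraph (Fin (3 * d - 1)) where
  Adj i j := i ≠ j ∧ ∃ k : ℕ, k < (d + 1) / 2 ∧
    (((i : ℕ) + (3 * k + 1)) % (3 * d - 1) = (j : ℕ) ∨
     ((j : ℕ) + (3 * k + 1)) % (3 * d - 1) = (i : ℕ))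
  symm := by
    refine ⟨?_⟩
    rintro i j ⟨hne, k, hk, h⟩
    exact ⟨hne.symm, k, hk, h.symm⟩
  loopless := by refine ⟨?_⟩; rintro i ⟨hne, -⟩; exact hne rfl

noncomputable instance (d : ℕ) : DecidableRel (Gamma d).Adj :=
  fun _ _ => Classical.dec _


lemma recover1 (n v a : ℕ) (hv : v < n) (ha : a < n) :
    (v + ((a + n - v) % n)) % n = a := by
  rcases le_or_gt v a with h | h
  · rw [show a + n - v = (a - v) + n by omega, Nat.add_mod_right,
      Nat.mod_eq_of_lt (show a - v < n by omega), show v + (a - v) = a by omega,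
      Nat.mod_eq_of_lt ha]
  · rw [Nat.mod_eq_of_lt (show a + n - v < n by omega),
      show v + (a + n - v) = a + n by omega, Nat.add_mod_right, Nat.mod_eq_of_lt ha]

lemma recover2 (n v b : ℕ) (hv : v < n) (hb : b < n) :
    ((v + b) % n + n - v) % n = b := by
  rcases Nat.lt_or_ge (v + b) n with h | h
  · rw [Nat.mod_eq_of_lt h, show v + b + n - v = b + n by omega, Nat.add_mod_right,
      Nat.mod_eq_of_lt hb]
  · have e : (v + b) % n = v + b - n := by
      rw [Nat.mod_eq_sub_mod h, Nat.mod_eq_of_lt (by omega)]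
    rw [e, show v + b - n + n - v = b by omega, Nat.mod_eq_of_lt hb]

lemma adj_iff (d : ℕ) (hd : 1 ≤ d) (i j : Fin (3 * d - 1)) :
    (Gamma d).Adj i j ↔ i ≠ j ∧ ((j : ℕ) + (3 * d - 1) - (i : ℕ)) % (3 * d - 1) % 3 = 1 := by
  have hi := i.isLt
  have hj := j.isLt
  constructor
  · rintro ⟨hne, k, hk, h | h⟩
    · refine ⟨hne, ?_⟩
      have hs : 3 * k + 1 < 3 * d - 1 := by omega
      rcases Nat.lt_or_ge ((i : ℕ) + (3 * k + 1)) (3 * d - 1) with hc | hc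
      · rw [Nat.mod_eq_of_lt hc] at h
        rw [show (j : ℕ) + (3 * d - 1) - (i : ℕ) = (3 * k + 1) + (3 * d - 1) by omega,
          Nat.add_mod_right, Nat.mod_eq_of_lt hs]
        omega
      · have h2 : ((i : ℕ) + (3 * k + 1)) % (3 * d - 1) = (i : ℕ) + (3 * k + 1) - (3 * d - 1) := by
          rw [Nat.mod_eq_sub_mod hc,
            Nat.mod_eq_of_lt (show (i : ℕ) + (3 * k + 1) - (3 * d - 1) < 3 * d - 1 by omega)]
        rw [h2] at h
        rw [Nat.mod_eq_of_lt (show (j : ℕ) + (3 * d - 1) - (i : ℕ) < 3 * d - 1 by omega)]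
        omega
    · refine ⟨hne, ?_⟩
      have hs : 3 * k + 1 < 3 * d - 1 := by omega
      rcases Nat.lt_or_ge ((j : ℕ) + (3 * k + 1)) (3 * d - 1) with hc | hc
      · rw [Nat.mod_eq_of_lt hc] at h
        rw [Nat.mod_eq_of_lt (show (j : ℕ) + (3 * d - 1) - (i : ℕ) < 3 * d - 1 by omega)]
        omega
      · have h2 : ((j : ℕ) + (3 * k + 1)) % (3 * d - 1) = (j : ℕ) + (3 * k + 1) - (3 * d - 1) := by
          rw [Nat.mod_eq_sub_mod hc,
            Nat.mod_eq_of_lt (show (j : ℕ) + (3 * k + 1) - (3 * d - 1) < 3 * d - 1 by omega)]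
        rw [h2] at h
        rw [show (j : ℕ) + (3 * d - 1) - (i : ℕ)
              = ((3 * d - 1) - (3 * k + 1)) + (3 * d - 1) by omega,
          Nat.add_mod_right,
          Nat.mod_eq_of_lt (show (3 * d - 1) - (3 * k + 1) < 3 * d - 1 by omega)]
        omega
  · rintro ⟨hne, hx⟩
    refine ⟨hne, ?_⟩
    have hvne : (i : ℕ) ≠ (j : ℕ) := fun h => hne (Fin.ext h)
    rcases le_or_gt (i : ℕ) (j : ℕ) with hle | hlt
    · have hxval : ((j : ℕ) + (3 * d - 1) - (i : ℕ)) % (3 * d - 1) = (j : ℕ) - (i : ℕ) := by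
        rw [show (j : ℕ) + (3 * d - 1) - (i : ℕ) = ((j : ℕ) - (i : ℕ)) + (3 * d - 1) by omega,
          Nat.add_mod_right, Nat.mod_eq_of_lt (show (j : ℕ) - (i : ℕ) < 3 * d - 1 by omega)]
      rw [hxval] at hx
      have hx1 : 1 ≤ (j : ℕ) - (i : ℕ) := by omega
      have hx2 : (j : ℕ) - (i : ℕ) < 3 * d - 1 := by omega
      obtain ⟨m, hm⟩ : ∃ m, (j : ℕ) - (i : ℕ) = 3 * m + 1 := ⟨((j : ℕ) - (i : ℕ)) / 3, by omega⟩
      rcases Nat.lt_or_ge m ((d + 1) / 2) with hms | hms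
      · exact ⟨m, hms, Or.inl (by rw [show (i : ℕ) + (3 * m + 1) = (j : ℕ) by omega,
          Nat.mod_eq_of_lt hj])⟩
      · refine ⟨d - 1 - m, by omega, Or.inr ?_⟩
        rw [show (j : ℕ) + (3 * (d - 1 - m) + 1) = (i : ℕ) + (3 * d - 1) by omega,
          Nat.add_mod_right, Nat.mod_eq_of_lt hi]
    · have hxval : ((j : ℕ) + (3 * d - 1) - (i : ℕ)) % (3 * d - 1)
          = (j : ℕ) + (3 * d - 1) - (i : ℕ) :=
        Nat.mod_eq_of_lt (by omega)
      rw [hxval] at hx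
      have hx1 : 1 ≤ (j : ℕ) + (3 * d - 1) - (i : ℕ) := by omega
      have hx2 : (j : ℕ) + (3 * d - 1) - (i : ℕ) < 3 * d - 1 := by omega
      obtain ⟨m, hm⟩ : ∃ m, (j : ℕ) + (3 * d - 1) - (i : ℕ) = 3 * m + 1 :=
        ⟨((j : ℕ) + (3 * d - 1) - (i : ℕ)) / 3, by omega⟩
      rcases Nat.lt_or_ge m ((d + 1) / 2) with hms | hms
      · refine ⟨m, hms, Or.inl ?_⟩
        rw [show (i : ℕ) + (3 * m + 1) = (j : ℕ) + (3 * d - 1) by omega,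
          Nat.add_mod_right, Nat.mod_eq_of_lt hj]
      · refine ⟨d - 1 - m, by omega, Or.inr ?_⟩
        rw [show (j : ℕ) + (3 * (d - 1 - m) + 1) = (i : ℕ) by omega, Nat.mod_eq_of_lt hi]

lemma count3 (n : ℕ) : ((Finset.range n).filter (fun x => x % 3 = 1)).card = (n + 1) / 3 := by
  induction n with
  | zero => simp
  | succ n ih =>
    rw [Finset.range_add_one, Finset.filter_insert]
    by_cases h : n % 3 = 1
    · rw [if_pos h, Finset.card_insert_of_notMem (by simp), ih]
      omega
    · rw [if_neg h, ih]
      omega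


/-- For every `d ≥ 1`, the graph `Γ_d` is `d`-regular, and for every `1 ≤ i ≤ d`,
`Γ_i` embeds into `Γ_d` as a subgraph. -/
theorem gamma_regular_and_monotone (d : ℕ) (hd : 1 ≤ d) :
    (∀ v : Fin (3 * d - 1), ((Gamma d).neighborFinset v).card = d) ∧
    (∀ i : ℕ, 1 ≤ i → i ≤ d →
      ∃ f : Fin (3 * i - 1) → Fin (3 * d - 1), Function.Injective f ∧
        ∀ a b : Fin (3 * i - 1), (Gamma i).Adj a b → (Gamma d).Adj (f a) (f b)) := by
  have hn : 0 < 3 * d - 1 := by omega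
  constructor
  · intro v
    have key : ((Gamma d).neighborFinset v).card
        = ((Finset.range (3 * d - 1)).filter (fun x => x % 3 = 1)).card := by
      refine Finset.card_bij (fun a _ => ((a : ℕ) + (3 * d - 1) - (v : ℕ)) % (3 * d - 1)) ?_ ?_ ?_
      · intro a ha
        rw [SimpleGraph.mem_neighborFinset, adj_iff d hd] at ha
        simp only [Finset.mem_filter, Finset.mem_range]
        exact ⟨Nat.mod_lt _ hn, ha.2⟩
      · intro a₁ ha₁ a₂ ha₂ h
        apply Fin.ext
        have e1 := recover1 (3 * d - 1) (v : ℕ) (a₁ : ℕ) v.isLt a₁.isLt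
        have e2 := recover1 (3 * d - 1) (v : ℕ) (a₂ : ℕ) v.isLt a₂.isLt
        rw [← e1, ← e2, h]
      · intro b hb
        simp only [Finset.mem_filter, Finset.mem_range] at hb
        obtain ⟨hb1, hb2⟩ := hb
        refine ⟨⟨((v : ℕ) + b) % (3 * d - 1), Nat.mod_lt _ hn⟩, ?_, ?_⟩
        · rw [SimpleGraph.mem_neighborFinset, adj_iff d hd]
          constructor
          · intro hvb
            have := recover2 (3 * d - 1) (v : ℕ) b v.isLt hb1
            have hv : (v : ℕ) = ((v : ℕ) + b) % (3 * d - 1) := congrArg Fin.val hvb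
            rw [← hv] at this
            rw [show (v : ℕ) + (3 * d - 1) - (v : ℕ) = 3 * d - 1 by omega,
              Nat.mod_self] at this
            omega
          · show (((v : ℕ) + b) % (3 * d - 1) + (3 * d - 1) - (v : ℕ)) % (3 * d - 1) % 3 = 1
            rw [recover2 (3 * d - 1) (v : ℕ) b v.isLt hb1]
            exact hb2
        · show (((v : ℕ) + b) % (3 * d - 1) + (3 * d - 1) - (v : ℕ)) % (3 * d - 1) = b
          exact recover2 (3 * d - 1) (v : ℕ) b v.isLt hb1
    rw [key, count3]
    omega
  · intro i hi1 hid
    have hle : 3 * i - 1 ≤ 3 * d - 1 := by omega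
    refine ⟨Fin.castLE hle, Fin.castLE_injective hle, ?_⟩
    intro a b hab
    rw [adj_iff i hi1] at hab
    rw [adj_iff d hd]
    obtain ⟨hne, hx⟩ := hab
    have ha := a.isLt
    have hb := b.isLt
    refine ⟨fun h => hne (Fin.castLE_injective hle h), ?_⟩
    simp only [Fin.coe_castLE]
    rcases le_or_gt (a : ℕ) (b : ℕ) with h | h
    · rw [show (b : ℕ) + (3 * i - 1) - (a : ℕ) = ((b : ℕ) - (a : ℕ)) + (3 * i - 1) by omega,
        Nat.add_mod_right,
        Nat.mod_eq_of_lt (show (b : ℕ) - (a : ℕ) < 3 * i - 1 by omega)] at hx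
      rw [show (b : ℕ) + (3 * d - 1) - (a : ℕ) = ((b : ℕ) - (a : ℕ)) + (3 * d - 1) by omega,
        Nat.add_mod_right,
        Nat.mod_eq_of_lt (show (b : ℕ) - (a : ℕ) < 3 * d - 1 by omega)]
      exact hx
    · rw [Nat.mod_eq_of_lt (show (b : ℕ) + (3 * i - 1) - (a : ℕ) < 3 * i - 1 by omega)] at hx
      rw [Nat.mod_eq_of_lt (show (b : ℕ) + (3 * d - 1) - (a : ℕ) < 3 * d - 1 by omega)]
      omega
end
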